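/- In the two-variable GBDT setting (D, D̂ real diagonal m×m, B = diag(±1), A ∈ M_n(ℂ), ρ : ℝ² → M_m(ℂ) with ρ* = BρB, and Π, S satisfying Π_x = −iAΠD + Π[D,ρ], Π_t = −iAΠD̂ + Π[D̂,ρ], S_x = ΠDBΠ*, S_t = ΠD̂BΠ*, with AS − SA* = iΠBΠ* and S invertible everywhere), fix z ∈ ℂ not in the spectrum of A with w_A(0,0,z) invertible, and let w : ℝ² → M_m(ℂ) be the wave function of the initial systems, i.e. w_x = (izD − [D,ρ])w, w_t = (izD̂ − [D̂,ρ])w, w(0,0) = I_m. Then w̃(x,t) := w_A(x,t,z) w(x,t) w_A(0,0,z)^{-1} satisfies the transformed systems w̃_x = (izD − [D,ρ̃]) w̃ and w̃_t = (izD̂ − [D̂,ρ̃]) w̃, with w̃(0,0) = I_m, where ρ̃ = ρ − BΠ*S^{-1}Π and w_A(x,t,z) = I_m − iBΠ(x,t)*S(x,t)^{-1}(A − zI_n)^{-1}Π(x,t). -/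

import Mathlib

open Matrix


section Aux

attribute [local instance] Matrix.linftyOpNormedAddCommGroup Matrix.linftyOpNormedRing
  Matrix.linftyOpNormedAlgebra Matrix.linftyOpNormedSpace

noncomputable instance auxCompleteMatrix {k : ℕ} : CompleteSpace (Matrix (Fin k) (Fin k) ℂ) :=
  FiniteDimensional.complete ℂ _

/-- Entrywise derivative of a matrix-valued function. -/
def HDe {a b : ℕ} (F : ℝ → Matrix (Fin a) (Fin b) ℂ) (F' : Matrix (Fin a) (Fin b) ℂ)
    (x : ℝ) : Prop :=
  ∀ i j, HasDerivAt (fun y => F y i j) (F' i j) x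

namespace HDe

variable {a b c : ℕ} {F G : ℝ → Matrix (Fin a) (Fin b) ℂ} {F' G' : Matrix (Fin a) (Fin b) ℂ}
  {x : ℝ}

theorem const (M : Matrix (Fin a) (Fin b) ℂ) : HDe (fun _ => M) 0 x := by
  intro i j
  simpa using hasDerivAt_const x (M i j)

theorem sub (hF : HDe F F' x) (hG : HDe G G' x) : HDe (fun y => F y - G y) (F' - G') x := by
  intro i j
  simpa using (hF i j).fun_sub (hG i j)

theorem smul (c : ℂ) (hF : HDe F F' x) : HDe (fun y => c • F y) (c • F') x := by
  intro i j
  simpa using (hF i j).const_mul c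

theorem mul {G : ℝ → Matrix (Fin b) (Fin c) ℂ} {G' : Matrix (Fin b) (Fin c) ℂ}
    {F : ℝ → Matrix (Fin a) (Fin b) ℂ} {F' : Matrix (Fin a) (Fin b) ℂ}
    (hF : HDe F F' x) (hG : HDe G G' x) :
    HDe (fun y => F y * G y) (F' * G x + F x * G') x := by
  intro i j
  have h : HasDerivAt (fun y => ∑ k, F y i k * G y k j)
      (∑ k, (F' i k * G x k j + F x i k * G' k j)) x :=
    HasDerivAt.fun_sum fun k _ => (hF i k).fun_mul (hG k j)
  simpa [Matrix.mul_apply, Matrix.add_apply, Finset.sum_add_distrib] using h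

theorem const_mul {G : ℝ → Matrix (Fin b) (Fin c) ℂ} {G' : Matrix (Fin b) (Fin c) ℂ}
    (M : Matrix (Fin a) (Fin b) ℂ) (hG : HDe G G' x) :
    HDe (fun y => M * G y) (M * G') x := by
  intro i j
  have h : HasDerivAt (fun y => ∑ k, M i k * G y k j) (∑ k, M i k * G' k j) x :=
    HasDerivAt.fun_sum fun k _ => (hG k j).const_mul (M i k)
  simpa [Matrix.mul_apply] using h

theorem mul_const {F : ℝ → Matrix (Fin a) (Fin b) ℂ} {F' : Matrix (Fin a) (Fin b) ℂ}
    (hF : HDe F F' x) (M : Matrix (Fin b) (Fin c) ℂ) :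
    HDe (fun y => F y * M) (F' * M) x := by
  intro i j
  have h : HasDerivAt (fun y => ∑ k, F y i k * M k j) (∑ k, F' i k * M k j) x :=
    HasDerivAt.fun_sum fun k _ => (hF i k).mul_const (M k j)
  simpa [Matrix.mul_apply] using h

theorem conjTranspose (hF : HDe F F' x) : HDe (fun y => (F y)ᴴ) F'ᴴ x := by
  intro i j
  simpa [Matrix.conjTranspose_apply] using (hF j i).star

theorem congr_deriv {F'' : Matrix (Fin a) (Fin b) ℂ} (hF : HDe F F' x) (e : F' = F'') :
    HDe F F'' x := e ▸ hF

theorem inv {k : ℕ} {S : ℝ → Matrix (Fin k) (Fin k) ℂ} {S' : Matrix (Fin k) (Fin k) ℂ}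
    (h : HDe S S' x) (hu : IsUnit (S x)) :
    HDe (fun y => (S y)⁻¹) (-((S x)⁻¹ * S' * (S x)⁻¹)) x := by
  have hS : HasDerivAt S S' x := by
    have h1 : HasDerivAt (fun y => ∑ i, ∑ j, S y i j • Matrix.single i j (1 : ℂ))
        (∑ i, ∑ j, S' i j • Matrix.single i j (1 : ℂ)) x :=
      HasDerivAt.fun_sum fun i _ => HasDerivAt.fun_sum fun j _ => (h i j).smul_const _
    have e : ∀ M : Matrix (Fin k) (Fin k) ℂ,
        ∑ i, ∑ j, M i j • Matrix.single i j (1 : ℂ) = M := by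
      intro M
      conv_rhs => rw [matrix_eq_sum_single M]
      refine Finset.sum_congr rfl fun i _ => Finset.sum_congr rfl fun j _ => ?_
      rw [Matrix.smul_single, smul_eq_mul, mul_one]
    have e2 : (fun y => ∑ i, ∑ j, S y i j • Matrix.single i j (1 : ℂ)) = S :=
      funext fun y => e _
    rw [e2, e] at h1
    exact h1
  have hunit : (↑hu.unit : Matrix (Fin k) (Fin k) ℂ) = S x := hu.unit_spec
  have hinv := (hasFDerivAt_ringInverse (𝕜 := ℝ) hu.unit).comp_hasDerivAt x hS
  simp only [ContinuousLinearMap.neg_apply, ContinuousLinearMap.mulLeftRight_apply] at hinv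
  have hval : (↑hu.unit⁻¹ : Matrix (Fin k) (Fin k) ℂ) = (S x)⁻¹ := by
    rw [Matrix.nonsing_inv_eq_ringInverse]
    calc (↑hu.unit⁻¹ : Matrix (Fin k) (Fin k) ℂ)
        = Ring.inverse (↑hu.unit : Matrix (Fin k) (Fin k) ℂ) := (Ring.inverse_unit _).symm
      _ = Ring.inverse (S x) := by rw [hunit]
  rw [hval] at hinv
  have hinv2 : HasDerivAt (fun y => (S y)⁻¹) (-((S x)⁻¹ * S' * (S x)⁻¹)) x := by
    simp only [Matrix.nonsing_inv_eq_ringInverse, mul_assoc] at hinv ⊢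
    exact hinv
  intro i j
  have hbnd : ∀ M : Matrix (Fin k) (Fin k) ℂ, ‖M i j‖ ≤ 1 * ‖M‖ := by
    intro M
    rw [one_mul]
    calc ‖M i j‖ ≤ ‖(WithLp.equiv 1 (Fin k → ℂ)).symm (M i)‖ := by
          rw [PiLp.norm_eq_sum (by norm_num)]
          simpa using Finset.single_le_sum (f := fun j' => ‖M i j'‖)
            (fun _ _ => norm_nonneg _) (Finset.mem_univ j)
      _ ≤ ‖M‖ :=
        norm_le_pi_norm (f := fun i' => (WithLp.equiv 1 (Fin k → ℂ)).symm (M i')) i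
  let L : Matrix (Fin k) (Fin k) ℂ →L[ℝ] ℂ :=
    LinearMap.mkContinuous
      { toFun := fun M => M i j, map_add' := fun _ _ => rfl, map_smul' := fun _ _ => rfl } 1 hbnd
  exact L.hasFDerivAt.comp_hasDerivAt x hinv2

end HDe

end Aux

lemma key_alg {n m : ℕ} (A S T R : Matrix (Fin n) (Fin n) ℂ)
    (E B ρ : Matrix (Fin m) (Fin m) ℂ) (P : Matrix (Fin n) (Fin m) ℂ) (z : ℂ)
    (hST : S * T = 1) (hTS : T * S = 1)
    (hRA : R * A = 1 + z • R) (hAR : A * R = 1 + z • R)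
    (hid : A * S - S * Aᴴ = Complex.I • (P * B * Pᴴ))
    (hBB : B * B = 1) (hBE : B * E = E * B) (hEH : Eᴴ = E)
    (hρH : ρᴴ = B * ρ * B) :
    (0 : Matrix (Fin m) (Fin m) ℂ) - Complex.I •
        ((B * ((-Complex.I) • (A * P * E) + P * (E * ρ - ρ * E))ᴴ * T
            + B * Pᴴ * (-(T * (P * E * B * Pᴴ) * T))) * R * P
          + B * Pᴴ * T * R * ((-Complex.I) • (A * P * E) + P * (E * ρ - ρ * E)))
      = ((Complex.I * z) • E - (E * (ρ - B * Pᴴ * T * P) - (ρ - B * Pᴴ * T * P) * E))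
          * (1 - Complex.I • (B * Pᴴ * T * R * P))
        - (1 - Complex.I • (B * Pᴴ * T * R * P))
          * ((Complex.I * z) • E - (E * ρ - ρ * E)) := by
  have hSTX : ∀ (X : Matrix (Fin n) (Fin m) ℂ), S * (T * X) = X := by
    intro X; rw [← Matrix.mul_assoc, hST, Matrix.one_mul]
  have hTSX : ∀ (X : Matrix (Fin n) (Fin m) ℂ), T * (S * X) = X := by
    intro X; rw [← Matrix.mul_assoc, hTS, Matrix.one_mul]
  have hRAX : ∀ (X : Matrix (Fin n) (Fin m) ℂ), R * (A * X) = X + z • (R * X) := by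
    intro X; rw [← Matrix.mul_assoc, hRA, Matrix.add_mul, Matrix.one_mul, Matrix.smul_mul]
  have hARX : ∀ (X : Matrix (Fin n) (Fin m) ℂ), A * (R * X) = X + z • (R * X) := by
    intro X; rw [← Matrix.mul_assoc, hAR, Matrix.add_mul, Matrix.one_mul, Matrix.smul_mul]
  have hBBX : ∀ (X : Matrix (Fin m) (Fin m) ℂ), B * (B * X) = X := by
    intro X; rw [← Matrix.mul_assoc, hBB, Matrix.one_mul]
  have hBEX : ∀ (X : Matrix (Fin m) (Fin m) ℂ), B * (E * X) = E * (B * X) := by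
    intro X; rw [← Matrix.mul_assoc, hBE, Matrix.mul_assoc]
  have hAHT : ∀ (X : Matrix (Fin n) (Fin m) ℂ),
      Aᴴ * (T * X) = T * (A * X) - Complex.I • (T * (P * (B * (Pᴴ * (T * X))))) := by
    intro X
    have e1 : T * ((A * S - S * Aᴴ) * (T * X))
        = Complex.I • (T * (P * (B * (Pᴴ * (T * X))))) := by
      rw [hid]; simp only [Matrix.smul_mul, Matrix.mul_smul, Matrix.mul_assoc]
    rw [Matrix.sub_mul] at e1
    rw [Matrix.mul_sub] at e1
    rw [Matrix.mul_assoc A, hSTX, Matrix.mul_assoc S, ← Matrix.mul_assoc T S,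
      hTS, Matrix.one_mul] at e1
    linear_combination (norm := module) -e1
  simp only [conjTranspose_add, conjTranspose_smul, conjTranspose_mul, conjTranspose_sub,
    hEH, hρH, Complex.star_def, map_neg, Complex.conj_I, neg_neg]
  simp only [Matrix.mul_add, Matrix.add_mul, Matrix.mul_sub, Matrix.sub_mul, Matrix.mul_smul,
    Matrix.smul_mul, smul_smul, smul_sub, smul_add, Matrix.mul_assoc, mul_one, one_mul,
    Matrix.mul_one, Matrix.one_mul, neg_smul, smul_neg, Matrix.neg_mul, Matrix.mul_neg, neg_neg,
    hAHT, hRAX, hARX, hBBX, hBEX, hSTX, hTSX]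
  match_scalars <;> simp [Complex.I_sq] <;> ring

/-- Main one-variable lemma: the transformed wave function satisfies the transformed system. -/
lemma main_one {n m : ℕ} (A : Matrix (Fin n) (Fin n) ℂ)
    (E B ρ0 : Matrix (Fin m) (Fin m) ℂ)
    (P : ℝ → Matrix (Fin n) (Fin m) ℂ) (Sf : ℝ → Matrix (Fin n) (Fin n) ℂ)
    (wf : ℝ → Matrix (Fin m) (Fin m) ℂ) (C : Matrix (Fin m) (Fin m) ℂ) (z : ℂ) (x : ℝ)
    (hP : HDe P ((-Complex.I) • (A * P x * E) + P x * (E * ρ0 - ρ0 * E)) x)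
    (hS : HDe Sf (P x * E * B * (P x)ᴴ) x)
    (hSu : ∀ y, IsUnit (Sf y))
    (hid : A * Sf x - Sf x * Aᴴ = Complex.I • (P x * B * (P x)ᴴ))
    (hAz : IsUnit (A - z • 1))
    (hBB : B * B = 1) (hBE : B * E = E * B) (hEH : Eᴴ = E) (hρH : ρ0ᴴ = B * ρ0 * B)
    (hw : HDe wf (((Complex.I * z) • E - (E * ρ0 - ρ0 * E)) * wf x) x) :
    HDe (fun y => (1 - Complex.I • (B * (P y)ᴴ * (Sf y)⁻¹ * (A - z • 1)⁻¹ * P y)) * wf y * C)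
      (((Complex.I * z) • E - (E * (ρ0 - B * (P x)ᴴ * (Sf x)⁻¹ * P x)
          - (ρ0 - B * (P x)ᴴ * (Sf x)⁻¹ * P x) * E))
        * ((1 - Complex.I • (B * (P x)ᴴ * (Sf x)⁻¹ * (A - z • 1)⁻¹ * P x)) * wf x * C)) x := by
  have hdetAz := (Matrix.isUnit_iff_isUnit_det _).mp hAz
  have hRA : (A - z • 1)⁻¹ * A = 1 + z • (A - z • 1)⁻¹ := by
    have h1 := Matrix.nonsing_inv_mul _ hdetAz
    rw [Matrix.mul_sub, Matrix.mul_smul, Matrix.mul_one] at h1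
    exact sub_eq_iff_eq_add.mp h1
  have hAR : A * (A - z • 1)⁻¹ = 1 + z • (A - z • 1)⁻¹ := by
    have h1 := Matrix.mul_nonsing_inv _ hdetAz
    rw [Matrix.sub_mul, Matrix.smul_mul, Matrix.one_mul] at h1
    exact sub_eq_iff_eq_add.mp h1
  have hdetS := (Matrix.isUnit_iff_isUnit_det _).mp (hSu x)
  have hST : Sf x * (Sf x)⁻¹ = 1 := Matrix.mul_nonsing_inv _ hdetS
  have hTS : (Sf x)⁻¹ * Sf x = 1 := Matrix.nonsing_inv_mul _ hdetS
  -- derivative of the Darboux matrix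
  have h1 : HDe (fun y => B * (P y)ᴴ)
      (B * ((-Complex.I) • (A * P x * E) + P x * (E * ρ0 - ρ0 * E))ᴴ) x :=
    HDe.const_mul B hP.conjTranspose
  have hT : HDe (fun y => (Sf y)⁻¹)
      (-((Sf x)⁻¹ * (P x * E * B * (P x)ᴴ) * (Sf x)⁻¹)) x := hS.inv (hSu x)
  have h2 := h1.mul hT
  have h3 := h2.mul_const (A - z • 1)⁻¹
  have h4 := h3.mul hP
  have h5 := (HDe.const (1 : Matrix (Fin m) (Fin m) ℂ)).sub (h4.smul Complex.I)
  have h6 : HDe (fun y => 1 - Complex.I • (B * (P y)ᴴ * (Sf y)⁻¹ * (A - z • 1)⁻¹ * P y))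
      (((Complex.I * z) • E - (E * (ρ0 - B * (P x)ᴴ * (Sf x)⁻¹ * P x)
          - (ρ0 - B * (P x)ᴴ * (Sf x)⁻¹ * P x) * E))
        * (1 - Complex.I • (B * (P x)ᴴ * (Sf x)⁻¹ * (A - z • 1)⁻¹ * P x))
      - (1 - Complex.I • (B * (P x)ᴴ * (Sf x)⁻¹ * (A - z • 1)⁻¹ * P x))
        * ((Complex.I * z) • E - (E * ρ0 - ρ0 * E))) x :=
    HDe.congr_deriv h5
      (key_alg A (Sf x) (Sf x)⁻¹ (A - z • 1)⁻¹ E B ρ0 (P x) z hST hTS hRA hAR hid hBB hBE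
        hEH hρH)
  have h7 := h6.mul hw
  have h8 := h7.mul_const C
  refine HDe.congr_deriv h8 ?_
  set M1 := (Complex.I * z) • E - (E * (ρ0 - B * (P x)ᴴ * (Sf x)⁻¹ * P x)
      - (ρ0 - B * (P x)ᴴ * (Sf x)⁻¹ * P x) * E) with hM1
  set M0 := (Complex.I * z) • E - (E * ρ0 - ρ0 * E) with hM0
  set a := 1 - Complex.I • (B * (P x)ᴴ * (Sf x)⁻¹ * (A - z • 1)⁻¹ * P x) with ha
  show ((M1 * a - a * M0) * wf x + a * (M0 * wf x)) * C = M1 * (a * wf x * C)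
  noncomm_ring

/-- The transformed wave function `w̃(x,t) = w_A(x,t,z) w(x,t) w_A(0,0,z)⁻¹` satisfies the
transformed auxiliary systems `w̃_x = (izD − [D,ρ̃])w̃`, `w̃_t = (izD̂ − [D̂,ρ̃])w̃`,
with `w̃(0,0) = I_m`. -/
theorem stmt_7 {n m : ℕ}
    (A : Matrix (Fin n) (Fin n) ℂ)
    (d dh b : Fin m → ℝ) (hb : ∀ k, b k = 1 ∨ b k = -1)
    (D Dh B : Matrix (Fin m) (Fin m) ℂ)
    (hD : D = Matrix.diagonal (fun k => (d k : ℂ)))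
    (hDh : Dh = Matrix.diagonal (fun k => (dh k : ℂ)))
    (hB : B = Matrix.diagonal (fun k => (b k : ℂ)))
    (ρ : ℝ → ℝ → Matrix (Fin m) (Fin m) ℂ)
    (hρsym : ∀ x t, (ρ x t)ᴴ = B * ρ x t * B)
    (Pm : ℝ → ℝ → Matrix (Fin n) (Fin m) ℂ)
    (S : ℝ → ℝ → Matrix (Fin n) (Fin n) ℂ)
    (hPmx : ∀ x t i j, HasDerivAt (fun y => Pm y t i j)
      (((-Complex.I) • (A * Pm x t * D) + Pm x t * (D * ρ x t - ρ x t * D)) i j) x)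
    (hPmt : ∀ x t i j, HasDerivAt (fun s => Pm x s i j)
      (((-Complex.I) • (A * Pm x t * Dh) + Pm x t * (Dh * ρ x t - ρ x t * Dh)) i j) t)
    (hSx : ∀ x t i j, HasDerivAt (fun y => S y t i j)
      ((Pm x t * D * B * (Pm x t)ᴴ) i j) x)
    (hSt : ∀ x t i j, HasDerivAt (fun s => S x s i j)
      ((Pm x t * Dh * B * (Pm x t)ᴴ) i j) t)
    (hid : ∀ x t, A * S x t - S x t * Aᴴ = Complex.I • (Pm x t * B * (Pm x t)ᴴ))
    (hSinv : ∀ x t, IsUnit (S x t))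
    (z : ℂ) (hz : z ∉ spectrum ℂ A)
    (wA : ℝ → ℝ → Matrix (Fin m) (Fin m) ℂ)
    (hwA : ∀ x t, wA x t = (1 : Matrix (Fin m) (Fin m) ℂ)
      - Complex.I • (B * (Pm x t)ᴴ * (S x t)⁻¹ * (A - z • 1)⁻¹ * Pm x t))
    (hwA00 : IsUnit (wA 0 0))
    (w : ℝ → ℝ → Matrix (Fin m) (Fin m) ℂ)
    (hwx : ∀ x t i j, HasDerivAt (fun y => w y t i j)
      ((((Complex.I * z) • D - (D * ρ x t - ρ x t * D)) * w x t) i j) x)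
    (hwt : ∀ x t i j, HasDerivAt (fun s => w x s i j)
      ((((Complex.I * z) • Dh - (Dh * ρ x t - ρ x t * Dh)) * w x t) i j) t)
    (hw00 : w 0 0 = 1) :
    (∀ x t i j, HasDerivAt (fun y => (wA y t * w y t * (wA 0 0)⁻¹) i j)
      ((((Complex.I * z) • D
          - (D * (ρ x t - B * (Pm x t)ᴴ * (S x t)⁻¹ * Pm x t)
              - (ρ x t - B * (Pm x t)ᴴ * (S x t)⁻¹ * Pm x t) * D))
        * (wA x t * w x t * (wA 0 0)⁻¹)) i j) x)
    ∧ (∀ x t i j, HasDerivAt (fun s => (wA x s * w x s * (wA 0 0)⁻¹) i j)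
      ((((Complex.I * z) • Dh
          - (Dh * (ρ x t - B * (Pm x t)ᴴ * (S x t)⁻¹ * Pm x t)
              - (ρ x t - B * (Pm x t)ᴴ * (S x t)⁻¹ * Pm x t) * Dh))
        * (wA x t * w x t * (wA 0 0)⁻¹)) i j) t)
    ∧ wA 0 0 * w 0 0 * (wA 0 0)⁻¹ = 1 := by
  have hBB : B * B = 1 := by
    rw [hB, Matrix.diagonal_mul_diagonal]
    rw [show (fun k => (b k : ℂ) * (b k : ℂ)) = fun _ => (1 : ℂ) from funext fun k => by
      rcases hb k with h | h <;> rw [h] <;> norm_num]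
    exact Matrix.diagonal_one
  have hBD : B * D = D * B := by
    rw [hB, hD, Matrix.diagonal_mul_diagonal, Matrix.diagonal_mul_diagonal]
    rw [show (fun i => (b i : ℂ) * (d i : ℂ)) = fun i => (d i : ℂ) * (b i : ℂ) from
      funext fun i => mul_comm _ _]
  have hBDh : B * Dh = Dh * B := by
    rw [hB, hDh, Matrix.diagonal_mul_diagonal, Matrix.diagonal_mul_diagonal]
    rw [show (fun i => (b i : ℂ) * (dh i : ℂ)) = fun i => (dh i : ℂ) * (b i : ℂ) from
      funext fun i => mul_comm _ _]
  have hDH : Dᴴ = D := by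
    rw [hD, Matrix.diagonal_conjTranspose]
    congr 1; funext k; simp [Pi.star_def, Complex.conj_ofReal]
  have hDhH : Dhᴴ = Dh := by
    rw [hDh, Matrix.diagonal_conjTranspose]
    congr 1; funext k; simp [Pi.star_def, Complex.conj_ofReal]
  have hAz : IsUnit (A - z • 1) := by
    have h1 : IsUnit (algebraMap ℂ (Matrix (Fin n) (Fin n) ℂ) z - A) :=
      spectrum.notMem_iff.mp hz
    have h2 := h1.neg
    rwa [neg_sub, Algebra.algebraMap_eq_smul_one] at h2
  refine ⟨?_, ?_, ?_⟩
  · intro x t i j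
    have hmain := main_one A D B (ρ x t) (fun y => Pm y t) (fun y => S y t) (fun y => w y t)
      ((1 - Complex.I • (B * (Pm 0 0)ᴴ * (S 0 0)⁻¹ * (A - z • 1)⁻¹ * Pm 0 0))⁻¹) z x
      (fun i j => hPmx x t i j) (fun i j => hSx x t i j)
      (fun y => hSinv y t) (hid x t) hAz hBB hBD hDH (hρsym x t)
      (fun i j => hwx x t i j)
    simp only [hwA]
    exact hmain i j
  · intro x t i j
    have hmain := main_one A Dh B (ρ x t) (fun s => Pm x s) (fun s => S x s) (fun s => w x s)
      ((1 - Complex.I • (B * (Pm 0 0)ᴴ * (S 0 0)⁻¹ * (A - z • 1)⁻¹ * Pm 0 0))⁻¹) z t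
      (fun i j => hPmt x t i j) (fun i j => hSt x t i j)
      (fun s => hSinv x s) (hid x t) hAz hBB hBDh hDhH (hρsym x t)
      (fun i j => hwt x t i j)
    simp only [hwA]
    exact hmain i j
  · rw [hw00, Matrix.mul_one,
      Matrix.mul_nonsing_inv _ ((Matrix.isUnit_iff_isUnit_det _).mp hwA00)]
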